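/- Let Ω be a properly convex open subset of R^n with coordinate directions e_1,…,e_n, and for x ∈ Ω let Ω_i(x) = Ω ∩ (x + R·e_i). Then the unit ball B(T_xΩ) of the Hilbert–Finsler norm at x contains the convex hull of the points ∂B(T_xΩ) ∩ R_±·e_i; consequently there is a constant K_n > 0, depending only on n, with Vol(B(T_xΩ)) ≥ K_n · ∏_{i=1}^n Vol_i(B(T_xΩ_i(x))), where Vol_i is 1-dimensional Lebesgue measure on R·e_i. -/

import Mathlib

open Set Filter MeasureTheory

/-- The Funk (asymmetric) distance of a convex set `S` in a real vector space,
expressed through the Minkowski gauge: `F(x,y) = - log (1 - gauge_{S-x}(y-x))`. -/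
noncomputable def funkDist {E : Type*} [AddCommGroup E] [Module ℝ E] (S : Set E) (x y : E) : ℝ :=
  - Real.log (1 - gauge ((fun z => z - x) '' S) (y - x))

/-- The Hilbert (cross-ratio) distance of a convex set `S`:
`d_S(x,y) = (1/2) log ([p:x:y:q])`, the symmetrization of the Funk distance. -/
noncomputable def hilbertDist {E : Type*} [AddCommGroup E] [Module ℝ E] (S : Set E) (x y : E) : ℝ :=
  (funkDist S x y + funkDist S y x) / 2

/-- A properly convex open subset of `P^n`, viewed in an affine chart:
a nonempty bounded convex open subset of `ℝ^n`. -/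
def IsProperlyConvex {E : Type*} [NormedAddCommGroup E] [NormedSpace ℝ E] (S : Set E) : Prop :=
  IsOpen S ∧ Convex ℝ S ∧ Bornology.IsBounded S ∧ S.Nonempty

/-- The open metric ball of the Hilbert metric of `S`. -/
noncomputable def hilbertBall {E : Type*} [AddCommGroup E] [Module ℝ E]
    (S : Set E) (x : E) (r : ℝ) : Set E :=
  {y ∈ S | hilbertDist S x y < r}

/-- `p` is an extremal point of `∂S`: it is not in the interior of any nontrivial segment
contained in `∂S`. -/
def IsExtremalPoint {E : Type*} [NormedAddCommGroup E] [NormedSpace ℝ E]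
    (S : Set E) (p : E) : Prop :=
  p ∈ frontier S ∧ ∀ a ∈ frontier S, ∀ b ∈ frontier S, p ∈ openSegment ℝ a b → a = b

/-- The unit ball `B(T_xΩ)` of the Finsler norm
`F(x,v) = (|v|/2) (1/|x x⁻| + 1/|x x⁺|) = (gauge_{S-x}(v) + gauge_{S-x}(-v))/2`
of the Hilbert metric of `S` at the point `x`. -/
noncomputable def finslerBall {E : Type*} [AddCommGroup E] [Module ℝ E]
    (S : Set E) (x : E) : Set E :=
  {v | gauge ((fun z => z - x) '' S) v + gauge ((fun z => z - x) '' S) (-v) < 2}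

/-- The Finsler norm `F(x,v) = (|v|/2)(1/|xx⁻| + 1/|xx⁺|)` of the Hilbert metric of `S`
at `x`, expressed through the Minkowski gauge. -/
noncomputable def finslerNorm {E : Type*} [AddCommGroup E] [Module ℝ E]
    (S : Set E) (x v : E) : ℝ :=
  (gauge ((fun z => z - x) '' S) v + gauge ((fun z => z - x) '' S) (-v)) / 2


section FinslerHelpers

open Metric Bornology

variable {E : Type*} [NormedAddCommGroup E] [NormedSpace ℝ E] {S : Set E} {x : E}

private lemma pc_convex (hS : IsProperlyConvex S) : Convex ℝ ((fun z => z - x) '' S) := by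
  have h : (fun z : E => z - x) = fun z => -x + z := by funext z; abel
  rw [h]
  exact hS.2.1.translate (-x)

private lemma pc_absorbent (hS : IsProperlyConvex S) (hx : x ∈ S) :
    Absorbent ℝ ((fun z => z - x) '' S) := by
  have h0 : (0 : E) ∈ (fun z => z - x) '' S := ⟨x, hx, sub_self x⟩
  have hopen : IsOpen ((fun z => z - x) '' S) :=
    (Homeomorph.subRight x).isOpenMap _ hS.1
  exact absorbent_nhds_zero (hopen.mem_nhds h0)

private lemma pc_gauge_pos (hS : IsProperlyConvex S) (hx : x ∈ S) {v : E} (hv : v ≠ 0) :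
    0 < gauge ((fun z => z - x) '' S) v := by
  obtain ⟨R, hR⟩ := hS.2.2.1.subset_closedBall 0
  have hrpos : (0 : ℝ) < |R| + ‖x‖ + 1 := by positivity
  have hsub : (fun z => z - x) '' S ⊆ ball (0 : E) (|R| + ‖x‖ + 1) := by
    rintro _ ⟨z, hz, rfl⟩
    have hz' : ‖z‖ ≤ R := by simpa using hR hz
    have h1 : ‖z - x‖ ≤ ‖z‖ + ‖x‖ := norm_sub_le _ _
    simp only [mem_ball, dist_zero_right]
    have h2 := le_abs_self R
    linarith
  have h1 : gauge (ball (0 : E) (|R| + ‖x‖ + 1)) v ≤ gauge ((fun z => z - x) '' S) v :=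
    gauge_mono (pc_absorbent hS hx) hsub v
  have h2 : gauge (ball (0 : E) (|R| + ‖x‖ + 1)) v = ‖v‖ / (|R| + ‖x‖ + 1) :=
    gauge_ball hrpos.le v
  have h3 : 0 < ‖v‖ / (|R| + ‖x‖ + 1) := div_pos (norm_pos_iff.2 hv) hrpos
  linarith

private lemma finslerNorm_nonneg' (S : Set E) (x v : E) : 0 ≤ finslerNorm S x v :=
  div_nonneg (add_nonneg (gauge_nonneg _) (gauge_nonneg _)) (by norm_num)

private lemma finslerNorm_zero' (S : Set E) (x : E) : finslerNorm S x 0 = 0 := by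
  simp [finslerNorm, gauge_zero]

private lemma finslerNorm_neg' (S : Set E) (x v : E) :
    finslerNorm S x (-v) = finslerNorm S x v := by
  simp [finslerNorm, neg_neg, add_comm]

private lemma finslerNorm_smul' (S : Set E) (x : E) (c : ℝ) (v : E) :
    finslerNorm S x (c • v) = |c| * finslerNorm S x v := by
  rcases le_or_gt 0 c with h | h
  · simp only [finslerNorm, ← smul_neg, gauge_smul_of_nonneg h, smul_eq_mul, abs_of_nonneg h]
    ring
  · have h1 : -(c • v) = (-c) • v := (neg_smul c v).symm
    have h2 : c • v = (-c) • (-v) := by rw [neg_smul, smul_neg, neg_neg]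
    simp only [finslerNorm]
    rw [h1, h2, gauge_smul_of_nonneg (by linarith : (0:ℝ) ≤ -c),
      gauge_smul_of_nonneg (by linarith : (0:ℝ) ≤ -c), smul_eq_mul, smul_eq_mul,
      abs_of_neg h]
    ring

private lemma finslerNorm_add_le' (hS : IsProperlyConvex S) (hx : x ∈ S) (u v : E) :
    finslerNorm S x (u + v) ≤ finslerNorm S x u + finslerNorm S x v := by
  have h := gauge_add_le (pc_convex hS) (pc_absorbent hS hx) u v
  have h' := gauge_add_le (pc_convex hS) (pc_absorbent hS hx) (-u) (-v)
  simp only [finslerNorm]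
  rw [neg_add]
  linarith

private lemma finslerNorm_sum_le' (hS : IsProperlyConvex S) (hx : x ∈ S)
    {ι : Type*} (s : Finset ι) (f : ι → E) :
    finslerNorm S x (∑ i ∈ s, f i) ≤ ∑ i ∈ s, finslerNorm S x (f i) := by
  classical
  induction s using Finset.cons_induction with
  | empty => simp [finslerNorm_zero']
  | cons a s ha ih =>
    rw [Finset.sum_cons, Finset.sum_cons]
    exact le_trans (finslerNorm_add_le' hS hx _ _) (by linarith)

private lemma mem_finslerBall_iff' (S : Set E) (x v : E) :
    v ∈ finslerBall S x ↔ finslerNorm S x v < 1 := by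
  simp only [finslerBall, Set.mem_setOf_eq, finslerNorm,
    div_lt_one (by norm_num : (0:ℝ) < 2)]

private lemma convex_finsler_le_one (hS : IsProperlyConvex S) (hx : x ∈ S) :
    Convex ℝ {v : E | finslerNorm S x v ≤ 1} := by
  intro u hu v hv a b ha hb hab
  simp only [Set.mem_setOf_eq] at hu hv ⊢
  calc finslerNorm S x (a • u + b • v)
      ≤ finslerNorm S x (a • u) + finslerNorm S x (b • v) := finslerNorm_add_le' hS hx _ _
    _ = a * finslerNorm S x u + b * finslerNorm S x v := by
        rw [finslerNorm_smul', finslerNorm_smul', abs_of_nonneg ha, abs_of_nonneg hb]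
    _ ≤ a * 1 + b * 1 := by gcongr
    _ = 1 := by rw [mul_one, mul_one, hab]

private lemma finsler_le_one_subset_closure (S : Set E) (x : E) :
    {v : E | finslerNorm S x v ≤ 1} ⊆ closure (finslerBall S x) := by
  intro v hv
  simp only [Set.mem_setOf_eq] at hv
  have htend : Filter.Tendsto (fun k : ℕ => (1 - 1 / ((k : ℝ) + 1)) • v)
      Filter.atTop (nhds v) := by
    have h1 : Filter.Tendsto (fun k : ℕ => 1 - 1 / ((k : ℝ) + 1)) Filter.atTop (nhds 1) := by
      simpa using tendsto_const_nhds.sub (tendsto_one_div_add_atTop_nhds_zero_nat (𝕜 := ℝ))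
    simpa using h1.smul_const v
  refine mem_closure_of_tendsto htend (Filter.Eventually.of_forall fun k => ?_)
  rw [mem_finslerBall_iff', finslerNorm_smul']
  have hk : 0 < 1 / ((k : ℝ) + 1) := by positivity
  have hk1 : 1 / ((k : ℝ) + 1) ≤ 1 := by
    rw [div_le_one (by positivity)]
    have := (Nat.cast_nonneg k : (0:ℝ) ≤ k)
    linarith
  have h0 : 0 ≤ 1 - 1 / ((k : ℝ) + 1) := by linarith
  rw [abs_of_nonneg h0]
  calc (1 - 1 / ((k : ℝ) + 1)) * finslerNorm S x v
      ≤ (1 - 1 / ((k : ℝ) + 1)) * 1 := mul_le_mul_of_nonneg_left hv h0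
    _ < 1 := by linarith

end FinslerHelpers

/-- The Finsler unit ball of a properly convex open `Ω ⊆ ℝ^n` at `x` contains the convex hull
of its boundary points in the coordinate directions `±e_i`; consequently there is a constant
`K_n > 0`, depending only on `n`, with
`Vol(B(T_xΩ)) ≥ K_n · ∏_i Vol_i(B(T_xΩ_i(x)))`, where `Ω_i(x) = Ω ∩ (x + ℝ·e_i)`. -/
theorem finslerBall_volume_ge_prod_slices (n : ℕ) :
    ∃ K : ℝ, 0 < K ∧ ∀ Ω : Set (EuclideanSpace ℝ (Fin n)), IsProperlyConvex Ω → ∀ x ∈ Ω,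
      (convexHull ℝ (⋃ i : Fin n,
          ({(finslerNorm Ω x (EuclideanSpace.single i (1:ℝ)))⁻¹ • EuclideanSpace.single i (1:ℝ),
            (finslerNorm Ω x (-(EuclideanSpace.single i (1:ℝ))))⁻¹ •
              (-(EuclideanSpace.single i (1:ℝ)))} : Set (EuclideanSpace ℝ (Fin n))))
        ⊆ closure (finslerBall Ω x)) ∧
      ENNReal.ofReal (K * ∏ i : Fin n,
          (volume {t : ℝ | finslerNorm Ω x (t • EuclideanSpace.single i (1:ℝ)) < 1}).toReal)
        ≤ volume (finslerBall Ω x) := by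
  classical
  refine ⟨((n : ℝ) + 1)⁻¹ ^ n, by positivity, ?_⟩
  intro Ω hΩ x hx
  have hene : ∀ i : Fin n, EuclideanSpace.single i (1:ℝ) ≠ 0 := by
    intro i h
    have := congrArg (fun w : EuclideanSpace ℝ (Fin n) => w i) h
    simp [EuclideanSpace.single_apply] at this
  have hcpos : ∀ i : Fin n, 0 < finslerNorm Ω x (EuclideanSpace.single i (1:ℝ)) := by
    intro i
    have h1 : 0 < gauge ((fun z => z - x) '' Ω) (EuclideanSpace.single i (1:ℝ)) :=
      pc_gauge_pos hΩ hx (hene i)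
    have h2 := gauge_nonneg (s := (fun z => z - x) '' Ω) (-(EuclideanSpace.single i (1:ℝ)))
    simp only [finslerNorm]
    linarith
  constructor
  · -- the convex hull statement
    refine (convexHull_min ?_ (convex_finsler_le_one hΩ hx)).trans
      (finsler_le_one_subset_closure Ω x)
    rintro p hp
    simp only [Set.mem_iUnion, Set.mem_insert_iff, Set.mem_singleton_iff] at hp
    obtain ⟨i, hp | hp⟩ := hp <;> subst hp <;> simp only [Set.mem_setOf_eq]
    · rw [finslerNorm_smul', abs_of_nonneg (inv_nonneg.2 (finslerNorm_nonneg' _ _ _)),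
        inv_mul_cancel₀ (hcpos i).ne']
    · rw [finslerNorm_smul', abs_of_nonneg (inv_nonneg.2 (finslerNorm_nonneg' _ _ _)),
        finslerNorm_neg', inv_mul_cancel₀ (hcpos i).ne']
  · -- the volume statement
    set a : Fin n → ℝ := fun i => (finslerNorm Ω x (EuclideanSpace.single i (1:ℝ)))⁻¹ with ha
    have hapos : ∀ i, 0 < a i := fun i => inv_pos.2 (hcpos i)
    have hslice : ∀ i : Fin n,
        {t : ℝ | finslerNorm Ω x (t • EuclideanSpace.single i (1:ℝ)) < 1}
          = Set.Ioo (-(a i)) (a i) := by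
      intro i
      ext t
      simp only [Set.mem_setOf_eq, Set.mem_Ioo, finslerNorm_smul']
      rw [← abs_lt, ha]
      simp only [← one_div]
      exact (lt_div_iff₀ (hcpos i)).symm
    have hvol_slice : ∀ i : Fin n,
        (volume {t : ℝ | finslerNorm Ω x (t • EuclideanSpace.single i (1:ℝ)) < 1}).toReal
          = 2 * a i := by
      intro i
      rw [hslice i, Real.volume_Ioo,
        ENNReal.toReal_ofReal (by have := (hapos i).le; linarith)]
      ring
    set T : Set (EuclideanSpace ℝ (Fin n)) :=
      (MeasurableEquiv.toLp 2 (Fin n → ℝ)).symm ⁻¹'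
        (Set.univ.pi fun i => Set.Ioo (-(a i / ((n:ℝ)+1))) (a i / ((n:ℝ)+1))) with hT
    have hTsub : T ⊆ finslerBall Ω x := by
      intro v hv
      simp only [hT, Set.mem_preimage, Set.mem_pi, Set.mem_univ, forall_true_left,
        MeasurableEquiv.coe_toLp_symm, Set.mem_Ioo] at hv
      have hv' : ∀ i, |v i| < a i / ((n:ℝ)+1) := fun i => abs_lt.2 ⟨(hv i).1, (hv i).2⟩
      rw [mem_finslerBall_iff']
      have hvsum : ∑ i : Fin n, (v i) • EuclideanSpace.single i (1:ℝ) = v := by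
        have h := (EuclideanSpace.basisFun (Fin n) ℝ).sum_repr v
        simpa [EuclideanSpace.basisFun_repr, EuclideanSpace.basisFun_apply] using h
      calc finslerNorm Ω x v
          = finslerNorm Ω x (∑ i : Fin n, (v i) • EuclideanSpace.single i (1:ℝ)) := by
            rw [hvsum]
        _ ≤ ∑ i : Fin n, finslerNorm Ω x ((v i) • EuclideanSpace.single i (1:ℝ)) :=
            finslerNorm_sum_le' hΩ hx _ _
        _ = ∑ i : Fin n, |v i| * finslerNorm Ω x (EuclideanSpace.single i (1:ℝ)) := by
            simp [finslerNorm_smul']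
        _ ≤ ∑ _i : Fin n, ((n:ℝ)+1)⁻¹ := by
            refine Finset.sum_le_sum fun i _ => ?_
            have h1 : |v i| * finslerNorm Ω x (EuclideanSpace.single i (1:ℝ))
                ≤ (a i / ((n:ℝ)+1)) * finslerNorm Ω x (EuclideanSpace.single i (1:ℝ)) :=
              mul_le_mul_of_nonneg_right (hv' i).le (hcpos i).le
            have h2 : (a i / ((n:ℝ)+1)) * finslerNorm Ω x (EuclideanSpace.single i (1:ℝ))
                = ((n:ℝ)+1)⁻¹ := by
              rw [ha]
              field_simp
              exact div_self (hcpos i).ne'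
            linarith
        _ < 1 := by
            rw [Finset.sum_const, Finset.card_fin, nsmul_eq_mul, ← div_eq_mul_inv,
              div_lt_one (by positivity)]
            linarith
    have hTvol : volume T = ∏ i : Fin n, ENNReal.ofReal (2 * (a i / ((n:ℝ)+1))) := by
      rw [hT, (EuclideanSpace.volume_preserving_symm_measurableEquiv_toLp (Fin n)).measure_preimage
        ((MeasurableSet.univ_pi fun i => measurableSet_Ioo).nullMeasurableSet),
        volume_pi_pi]
      refine Finset.prod_congr rfl fun i _ => ?_
      rw [Real.volume_Ioo]
      congr 1
      ring
    have hprod : ∏ i : Fin n,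
        (volume {t : ℝ | finslerNorm Ω x (t • EuclideanSpace.single i (1:ℝ)) < 1}).toReal
          = ∏ i : Fin n, (2 * a i) :=
      Finset.prod_congr rfl fun i _ => hvol_slice i
    have hKeq : (((n:ℝ)+1)⁻¹ ^ n) * ∏ i : Fin n, (2 * a i)
        = ∏ i : Fin n, (2 * (a i / ((n:ℝ)+1))) := by
      have h : ∏ i : Fin n, (2 * (a i / ((n:ℝ)+1)))
          = ∏ i : Fin n, (((n:ℝ)+1)⁻¹ * (2 * a i)) :=
        Finset.prod_congr rfl fun i _ => by ring
      rw [h, Finset.prod_mul_distrib (f := fun _ : Fin n => ((n:ℝ)+1)⁻¹)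
        (g := fun i => 2 * a i), Finset.prod_const, Finset.card_fin]
    calc ENNReal.ofReal ((((n:ℝ)+1)⁻¹ ^ n) * ∏ i : Fin n,
          (volume {t : ℝ | finslerNorm Ω x (t • EuclideanSpace.single i (1:ℝ)) < 1}).toReal)
        = ENNReal.ofReal (∏ i : Fin n, (2 * (a i / ((n:ℝ)+1)))) := by rw [hprod, hKeq]
      _ = ∏ i : Fin n, ENNReal.ofReal (2 * (a i / ((n:ℝ)+1))) :=
          ENNReal.ofReal_prod_of_nonneg fun i _ => by
            have := (hapos i).le
            positivity
      _ = volume T := hTvol.symm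
      _ ≤ volume (finslerBall Ω x) := measure_mono hTsub
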